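/- Let μ = (a+1, b-1) be a partition with a+1 > b-1 and b ≥ 3, and let v_i = (a, 1^{i-2}, 2, 1^{b-i}) for 2 ≤ i ≤ b (content: a copies of 1, one copy each of 2,…,b except two copies of i). Then the number of standard tableaux of shape μ and content v_i equals b-1. -/

import Mathlib

set_option maxHeartbeats 1000000


/-- A standard tableau of two-row shape `(μ₁, μ₂)` with entries in `{1, …, n}`:
rows weakly increase left to right, columns strictly increase top to bottom. -/
structure TwoRowStandardTableau (μ1 μ2 n : ℕ) where
  row1 : Fin μ1 → ℕ
  row2 : Fin μ2 → ℕ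
  row1_mem : ∀ p, 1 ≤ row1 p ∧ row1 p ≤ n
  row2_mem : ∀ p, 1 ≤ row2 p ∧ row2 p ≤ n
  row1_mono : Monotone row1
  row2_mono : Monotone row2
  col_strict : ∀ (p : Fin μ2) (h : (p : ℕ) < μ1), row1 ⟨(p : ℕ), h⟩ < row2 p

/-- The content of a tableau: the number of occurrences of the entry `k`. -/
def TwoRowStandardTableau.content {μ1 μ2 n : ℕ} (T : TwoRowStandardTableau μ1 μ2 n)
    (k : ℕ) : ℕ :=
  (Finset.univ.filter fun p => T.row1 p = k).card +
    (Finset.univ.filter fun p => T.row2 p = k).card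

/- ### Auxiliary lemmas -/

lemma aux_tableau_ext {μ1 μ2 n : ℕ} {S T : TwoRowStandardTableau μ1 μ2 n}
    (h1 : S.row1 = T.row1) (h2 : S.row2 = T.row2) : S = T := by
  cases S; cases T
  dsimp at h1 h2
  subst h1; subst h2
  rfl

lemma aux_count_ofFn {m : ℕ} (f : Fin m → ℕ) (k : ℕ) :
    (Finset.univ.filter fun p => f p = k).card = Multiset.count k ↑(List.ofFn f) := by
  rw [← Fin.univ_val_map, Multiset.count_map]
  rw [Multiset.filter_congr (fun x _ => (eq_comm : k = f x ↔ f x = k))]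
  rfl

lemma aux_monotone_eq_of_counts {m : ℕ} {f g : Fin m → ℕ} (hf : Monotone f) (hg : Monotone g)
    (h : ∀ k, (Finset.univ.filter fun p => f p = k).card
        = (Finset.univ.filter fun p => g p = k).card) : f = g := by
  have hml : (↑(List.ofFn f) : Multiset ℕ) = ↑(List.ofFn g) := by
    refine Multiset.ext.mpr fun k => ?_
    rw [← aux_count_ofFn, ← aux_count_ofFn, h]
  exact List.ofFn_injective ((Multiset.coe_eq_coe.mp hml).eq_of_pairwise'
    hf.sortedLE_ofFn.pairwise hg.sortedLE_ofFn.pairwise)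

/- ### The first row -/

def auxR1 (a x : ℕ) : Fin (a + 1) → ℕ := fun p => if p.1 < a then 1 else x

lemma auxR1_mono (a x : ℕ) (hx : 1 ≤ x) : Monotone (auxR1 a x) := by
  intro p q hpq
  have hpq' : p.1 ≤ q.1 := hpq
  unfold auxR1
  split_ifs <;> omega

lemma auxR1_count (a x : ℕ) (hx : 2 ≤ x) (k : ℕ) :
    (Finset.univ.filter fun p => auxR1 a x p = k).card
      = if k = 1 then a else if k = x then 1 else 0 := by
  unfold auxR1
  by_cases hk1 : k = 1
  · rw [if_pos hk1]
    have he : ((Finset.univ : Finset (Fin (a+1))).filter fun p => (if p.1 < a then 1 else x) = k)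
        = Finset.Iio ⟨a, by omega⟩ := by
      ext p
      simp only [Finset.mem_filter, Finset.mem_univ, true_and, Finset.mem_Iio, Fin.lt_def]
      split_ifs with h <;> omega
    rw [he, Fin.card_Iio]
  · by_cases hkx : k = x
    · rw [if_neg hk1, if_pos hkx]
      have he : ((Finset.univ : Finset (Fin (a+1))).filter fun p => (if p.1 < a then 1 else x) = k)
          = {(⟨a, by omega⟩ : Fin (a+1))} := by
        ext p
        have hp2 := p.2
        simp only [Finset.mem_filter, Finset.mem_univ, true_and, Finset.mem_singleton,
          Fin.ext_iff]
        split_ifs with h <;> omega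
      rw [he, Finset.card_singleton]
    · rw [if_neg hk1, if_neg hkx]
      rw [Finset.card_eq_zero, Finset.filter_eq_empty_iff]
      intro p _
      split_ifs with h <;> omega

/- ### The second row -/

def auxM (b i x : ℕ) : Multiset ℕ := (i ::ₘ (Finset.Icc 2 b).val).erase x

lemma auxM_mem {b i x k : ℕ} (hk : k ∈ auxM b i x) : k = i ∨ (2 ≤ k ∧ k ≤ b) := by
  have := Multiset.mem_of_mem_erase hk
  rcases Multiset.mem_cons.mp this with h | h
  · exact Or.inl h
  · exact Or.inr (Finset.mem_Icc.mp h)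

lemma auxM_card {b i x : ℕ} (hb : 3 ≤ b) (hx : x ∈ Finset.Icc 2 b) :
    Multiset.card (auxM b i x) = b - 1 := by
  unfold auxM
  have hv : Multiset.card (Finset.Icc 2 b).val = b - 1 := by
    rw [← Finset.card_def, Nat.card_Icc]
    omega
  rw [Multiset.card_erase_of_mem (Multiset.mem_cons_of_mem hx), Multiset.card_cons, hv,
    Nat.pred_succ]

lemma auxM_count {b i x : ℕ} (k : ℕ) :
    Multiset.count k (auxM b i x)
      = (if k = i then 1 else 0) + (if 2 ≤ k ∧ k ≤ b then 1 else 0)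
        - (if k = x then 1 else 0) := by
  unfold auxM
  have hcnt : Multiset.count k (i ::ₘ (Finset.Icc 2 b).val)
      = (if k = i then 1 else 0) + (if 2 ≤ k ∧ k ≤ b then 1 else 0) := by
    rw [Multiset.count_cons]
    have hic : Multiset.count k (Finset.Icc 2 b).val = if 2 ≤ k ∧ k ≤ b then 1 else 0 := by
      split_ifs with h
      · exact Multiset.count_eq_one_of_mem (Finset.Icc 2 b).nodup (Finset.mem_Icc.mpr h)
      · exact Multiset.count_eq_zero_of_notMem (fun hm => h (Finset.mem_Icc.mp hm))
    rw [hic]; ring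
  rcases eq_or_ne k x with rfl | hkx
  · rw [Multiset.count_erase_self, hcnt, if_pos rfl]
  · rw [Multiset.count_erase_of_ne hkx, hcnt, if_neg hkx, Nat.sub_zero]

def auxL (b i x : ℕ) : List ℕ := Multiset.sort (auxM b i x) (· ≤ ·)

lemma auxL_length {b i x : ℕ} (hb : 3 ≤ b) (hx : x ∈ Finset.Icc 2 b) :
    (auxL b i x).length = b - 1 := by
  rw [auxL, Multiset.length_sort, auxM_card hb hx]

def auxR2 (b i x : ℕ) : Fin (b - 1) → ℕ := fun j => (auxL b i x).getD j.1 0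

lemma auxR2_eq_get {b i x : ℕ} (hb : 3 ≤ b) (hx : x ∈ Finset.Icc 2 b) (j : Fin (b - 1)) :
    auxR2 b i x j = (auxL b i x).get ⟨j.1, by rw [auxL_length hb hx]; exact j.2⟩ := by
  rw [auxR2, List.getD_eq_getElem]
  rfl

lemma auxR2_mem {b i x : ℕ} (hb : 3 ≤ b) (hx : x ∈ Finset.Icc 2 b) (j : Fin (b - 1)) :
    auxR2 b i x j ∈ auxM b i x := by
  have hmem : auxR2 b i x j ∈ auxL b i x := by
    rw [auxR2_eq_get hb hx]
    exact List.get_mem _ _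
  unfold auxL at hmem
  exact (Multiset.mem_sort _).mp hmem

lemma auxR2_mono {b i x : ℕ} (hb : 3 ≤ b) (hx : x ∈ Finset.Icc 2 b) :
    Monotone (auxR2 b i x) := by
  intro p q hpq
  rw [auxR2_eq_get hb hx, auxR2_eq_get hb hx]
  exact (Multiset.pairwise_sort _ _).rel_get_of_le (by exact hpq)

lemma auxR2_count {b i x : ℕ} (hb : 3 ≤ b) (hx : x ∈ Finset.Icc 2 b) (k : ℕ) :
    (Finset.univ.filter fun j => auxR2 b i x j = k).card = Multiset.count k (auxM b i x) := by
  have hofn : List.ofFn (auxR2 b i x) = auxL b i x := by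
    apply List.ext_get (by simp [auxL_length hb hx])
    intro p h1 h2
    rw [List.get_ofFn, auxR2_eq_get hb hx]
    rfl
  rw [aux_count_ofFn, hofn]
  conv_rhs => rw [← Multiset.sort_eq (auxM b i x) (· ≤ ·)]
  rfl

/- ### The tableau -/

def auxTab (a b i n x : ℕ) (hb : 3 ≤ b) (hba : b - 1 ≤ a) (hn : a + b ≤ n) (hi : 2 ≤ i)
    (hib : i ≤ b) (hx : x ∈ Finset.Icc 2 b) : TwoRowStandardTableau (a + 1) (b - 1) n where
  row1 := auxR1 a x
  row2 := auxR2 b i x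
  row1_mem := by
    intro p
    have hx2 := Finset.mem_Icc.mp hx
    unfold auxR1
    split_ifs <;> omega
  row2_mem := by
    intro j
    have h : auxR2 b i x j = i ∨ (2 ≤ auxR2 b i x j ∧ auxR2 b i x j ≤ b) :=
      auxM_mem (auxR2_mem hb hx j)
    omega
  row1_mono := auxR1_mono a x (by have := Finset.mem_Icc.mp hx; omega)
  row2_mono := auxR2_mono hb hx
  col_strict := by
    intro p hp
    have h2 : auxR2 b i x p = i ∨ (2 ≤ auxR2 b i x p ∧ auxR2 b i x p ≤ b) :=
      auxM_mem (auxR2_mem hb hx p)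
    have hp2 := p.2
    show (if p.1 < a then 1 else x) < auxR2 b i x p
    split_ifs with h <;> omega

lemma auxTab_content (a b i n x : ℕ) (hb : 3 ≤ b) (hba : b - 1 ≤ a) (hn : a + b ≤ n)
    (hi : 2 ≤ i) (hib : i ≤ b) (hx : x ∈ Finset.Icc 2 b) (k : ℕ) :
    (auxTab a b i n x hb hba hn hi hib hx).content k
      = if k = 1 then a else if k = i then 2 else if 2 ≤ k ∧ k ≤ b then 1 else 0 := by
  have hx2 := Finset.mem_Icc.mp hx
  have hc : (auxTab a b i n x hb hba hn hi hib hx).content k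
      = (Finset.univ.filter fun p => auxR1 a x p = k).card
        + (Finset.univ.filter fun j => auxR2 b i x j = k).card := rfl
  rw [hc, auxR1_count a x hx2.1 k, auxR2_count hb hx k, auxM_count k]
  split_ifs <;> omega


/-- The number of standard tableaux of shape `μ = (a+1, b-1)` and content
`vᵢ = (a, 1^{i-2}, 2, 1^{b-i})` (entry `1` appearing `a` times, entry `i` twice, and each
other entry of `{2, …, b}` once) is `b - 1`. -/
theorem stmt_9 (a b i n : ℕ) (hb : 3 ≤ b) (hi : 2 ≤ i) (hib : i ≤ b)
    (hμ : b - 1 < a + 1) (hn : a + b ≤ n) :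
    Nat.card {T : TwoRowStandardTableau (a + 1) (b - 1) n //
      ∀ k, T.content k =
        if k = 1 then a else if k = i then 2 else if 2 ≤ k ∧ k ≤ b then 1 else 0} =
      b - 1 := by
  have hba : b - 1 ≤ a := by omega
  let G : {x // x ∈ Finset.Icc 2 b} → {T : TwoRowStandardTableau (a + 1) (b - 1) n //
      ∀ k, T.content k =
        if k = 1 then a else if k = i then 2 else if 2 ≤ k ∧ k ≤ b then 1 else 0} :=
    fun x => ⟨auxTab a b i n x.1 hb hba hn hi hib x.2,
      auxTab_content a b i n x.1 hb hba hn hi hib x.2⟩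
  have hGbij : Function.Bijective G := by
    constructor
    · intro x y hxy
      have h2 : auxR1 a x.1 ⟨a, by omega⟩ = auxR1 a y.1 ⟨a, by omega⟩ :=
        congrFun (congrArg (fun s => s.1.row1) hxy) ⟨a, by omega⟩
      unfold auxR1 at h2
      rw [if_neg (lt_irrefl a), if_neg (lt_irrefl a)] at h2
      exact Subtype.ext h2
    · rintro ⟨T, hT⟩
      -- every entry of row2 is at least 2
      have hr2lb : ∀ p : Fin (b - 1), 2 ≤ T.row2 p := by
        intro p
        have h1 := (T.row1_mem ⟨p.1, by omega⟩).1
        have h2 := T.col_strict p (by omega)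
        omega
      have hr2c1 : (Finset.univ.filter fun p => T.row2 p = 1).card = 0 := by
        rw [Finset.card_eq_zero, Finset.filter_eq_empty_iff]
        intro p _
        have := hr2lb p; omega
      have hc1 : T.content 1 = a := by
        have h := hT 1
        simp only [if_pos rfl] at h
        exact h
      have hcdef : ∀ k, T.content k = (Finset.univ.filter fun p => T.row1 p = k).card
          + (Finset.univ.filter fun p => T.row2 p = k).card := fun _ => rfl
      have hr1c1 : (Finset.univ.filter fun p => T.row1 p = 1).card = a := by
        have h := hcdef 1
        omega
      obtain ⟨x, hxdef⟩ : ∃ v : ℕ, v = T.row1 ⟨a, by omega⟩ := ⟨_, rfl⟩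
      have hx1 : x ≠ 1 := by
        intro hx
        have hall : ∀ p : Fin (a + 1), T.row1 p = 1 := by
          intro p
          have hle : T.row1 p ≤ T.row1 ⟨a, by omega⟩ :=
            T.row1_mono (by rw [Fin.le_def]; exact Nat.lt_succ_iff.mp p.2)
          have := (T.row1_mem p).1
          omega
        have heq : (Finset.univ.filter fun p => T.row1 p = 1)
            = (Finset.univ : Finset (Fin (a + 1))) :=
          Finset.filter_eq_self.mpr fun p _ => hall p
        rw [heq, Finset.card_univ, Fintype.card_fin] at hr1c1
        omega
      have hx2 : 2 ≤ x := by
        have := (T.row1_mem ⟨a, by omega⟩).1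
        omega
      -- the counts of row 1
      have hcards : ∀ k, k ≠ 1 →
          (Finset.univ.filter fun p => T.row1 p = k).card = if k = x then 1 else 0 := by
        have hsplit := Finset.card_filter_add_card_filter_not
          (s := (Finset.univ : Finset (Fin (a + 1)))) (p := fun p => T.row1 p = 1)
        rw [Finset.card_univ, Fintype.card_fin] at hsplit
        have hne : (Finset.univ.filter fun p => ¬ T.row1 p = 1).card = 1 := by omega
        obtain ⟨q, hq⟩ := Finset.card_eq_one.mp hne
        have hqa : q = ⟨a, by omega⟩ := by
          have hmem : (⟨a, by omega⟩ : Fin (a + 1))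
              ∈ Finset.univ.filter fun p => ¬ T.row1 p = 1 := by
            simp only [Finset.mem_filter, Finset.mem_univ, true_and]
            rw [← hxdef]
            exact hx1
          rw [hq, Finset.mem_singleton] at hmem
          exact hmem.symm
        rw [hqa] at hq
        intro k hk
        have hsub : (Finset.univ.filter fun p => T.row1 p = k)
            ⊆ {(⟨a, by omega⟩ : Fin (a + 1))} := by
          rw [← hq]
          intro p hp
          rw [Finset.mem_filter] at hp ⊢
          exact ⟨hp.1, by rw [hp.2]; exact hk⟩
        rw [Finset.subset_singleton_iff] at hsub
        by_cases hkx : k = x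
        · rw [if_pos hkx]
          rcases hsub with he | he
          · exfalso
            have hm : (⟨a, by omega⟩ : Fin (a + 1))
                ∈ Finset.univ.filter fun p => T.row1 p = k := by
              simp only [Finset.mem_filter, Finset.mem_univ, true_and]
              rw [hkx, hxdef]
            rw [he] at hm
            exact absurd hm (Finset.notMem_empty _)
          · rw [he, Finset.card_singleton]
        · rw [if_neg hkx]
          rcases hsub with he | he
          · rw [he, Finset.card_empty]
          · exfalso
            have hm : (⟨a, by omega⟩ : Fin (a + 1))
                ∈ Finset.univ.filter fun p => T.row1 p = k := by
              rw [he]; exact Finset.mem_singleton_self _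
            rw [Finset.mem_filter] at hm
            exact hkx (by rw [hxdef, hm.2])
      -- x lies in [2, b]
      have hxmem : x ∈ Finset.Icc 2 b := by
        have hpos : 0 < (Finset.univ.filter fun p => T.row1 p = x).card := by
          refine Finset.card_pos.mpr ⟨⟨a, by omega⟩, ?_⟩
          simp only [Finset.mem_filter, Finset.mem_univ, true_and]
          exact hxdef.symm
        have hTx := hT x
        rw [hcdef x] at hTx
        refine Finset.mem_Icc.mpr ?_
        split_ifs at hTx <;> omega
      -- row1 is determined
      have hrow1 : T.row1 = auxR1 a x := by
        apply aux_monotone_eq_of_counts T.row1_mono (auxR1_mono a x (by omega))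
        intro k
        rw [auxR1_count a x hx2 k]
        by_cases hk : k = 1
        · rw [if_pos hk, hk]; exact hr1c1
        · rw [if_neg hk]; exact hcards k hk
      -- row2 counts are determined
      have hr2count : ∀ k, (Finset.univ.filter fun p => T.row2 p = k).card
          = Multiset.count k (auxM b i x) := by
        intro k
        have hck := hT k
        rw [hcdef k] at hck
        rw [auxM_count k]
        have hxm := Finset.mem_Icc.mp hxmem
        by_cases hk : k = 1
        · subst hk
          rw [hr1c1] at hck
          split_ifs at hck ⊢ <;> omega
        · rw [hcards k hk] at hck
          split_ifs at hck ⊢ <;> omega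
      -- row2 is determined
      have hrow2 : T.row2 = auxR2 b i x := by
        apply aux_monotone_eq_of_counts T.row2_mono (auxR2_mono hb hxmem)
        intro k
        rw [hr2count k, auxR2_count hb hxmem k]
      refine ⟨⟨x, hxmem⟩, Subtype.ext ?_⟩
      show auxTab a b i n x hb hba hn hi hib hxmem = T
      exact aux_tableau_ext (by rw [hrow1]; rfl) (by rw [hrow2]; rfl)
  rw [(Nat.card_eq_of_bijective G hGbij).symm, Nat.card_eq_finsetCard, Nat.card_Icc]
  omega
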